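/- Let p be a prime and k a positive integer. Then the polynomial φ_{p^k+1} ∈ F_p[X,Y,Z] is square-free, i.e., it is not divisible by the square of any nonconstant polynomial. -/

import Mathlib

open MvPolynomial

private lemma mulEquiv_squarefree {M N : Type*} [CommMonoid M] [CommMonoid N]
    (e : M ≃* N) {a : M} (ha : Squarefree a) : Squarefree (e a) := by
  intro x hx
  have h1 : e.symm x * e.symm x ∣ a := by
    have := map_dvd e.symm hx
    simpa using this
  have h2 := ha _ h1
  have := h2.map e
  simpa using this

private lemma prime_X_fin3 (p : ℕ) [Fact p.Prime] (i : Fin 3) :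
    Prime (X i : MvPolynomial (Fin 3) (ZMod p)) := by
  have h0 : Prime (X 0 : MvPolynomial (Fin 3) (ZMod p)) := by
    rw [← MulEquiv.prime_iff (finSuccEquiv (ZMod p) 2).toMulEquiv]
    have : (finSuccEquiv (ZMod p) 2).toMulEquiv (X 0) = Polynomial.X := finSuccEquiv_X_zero
    rw [this]
    exact Polynomial.prime_X
  rw [← MulEquiv.prime_iff (renameEquiv (ZMod p) (Equiv.swap (0 : Fin 3) i)).toMulEquiv] at h0
  simpa using h0

private lemma X_not_dvd_X_fin3 (p : ℕ) [Fact p.Prime] :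
    ¬ (X 1 : MvPolynomial (Fin 3) (ZMod p)) ∣ X 2 := by
  intro h
  have := map_dvd (eval (fun i : Fin 3 => if i = 2 then (1 : ZMod p) else 0)) h
  simp at this

private lemma sf_aux (p : ℕ) [Fact p.Prime] (n : ℕ) (hn : 1 ≤ n)
    (hnz : ((n : ℕ) : ZMod p) ≠ 0) :
    Squarefree (X 1 ^ n + X 2 ^ n : MvPolynomial (Fin 3) (ZMod p)) := by
  set g : MvPolynomial (Fin 3) (ZMod p) := X 1 ^ n + X 2 ^ n with hg
  intro d hd
  by_contra hu
  have hgne : g ≠ 0 := by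
    intro h
    have := congrArg (eval (fun i : Fin 3 => if i = 1 then (1 : ZMod p) else 0)) h
    simp [hg, zero_pow (by omega : n ≠ 0)] at this
  have hd0 : d ≠ 0 := by
    rintro rfl
    exact hgne (zero_dvd_iff.mp (by simpa using hd))
  obtain ⟨π, hπirr, hπd⟩ := WfDvdMonoid.exists_irreducible_factor hu hd0
  have hππ : π * π ∣ g := (mul_dvd_mul hπd hπd).trans hd
  have key : ∀ i : Fin 3, π ∣ (pderiv i) g := by
    obtain ⟨c, hc⟩ := hππ
    intro i
    rw [hc, pderiv_mul, pderiv_mul]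
    exact dvd_add (((dvd_mul_left π _).add (dvd_mul_right π _)).mul_right c)
      ((dvd_mul_right π π).mul_right _)
  have hCn : IsUnit (C ((n : ℕ) : ZMod p) : MvPolynomial (Fin 3) (ZMod p)) :=
    (isUnit_iff_ne_zero.mpr hnz).map (C : ZMod p →+* MvPolynomial (Fin 3) (ZMod p))
  have hcast : ((n : ℕ) : MvPolynomial (Fin 3) (ZMod p)) = C ((n : ℕ) : ZMod p) := by
    simp
  have hdvd1 : π ∣ X 1 ^ (n - 1) := by
    have h1 := key 1
    rw [hg, map_add] at h1
    simp only [pderiv_pow, pderiv_X_self, pderiv_X_of_ne (show (2 : Fin 3) ≠ 1 by decide),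
      mul_zero, add_zero, zero_add, mul_one] at h1
    rw [hcast] at h1
    exact (IsUnit.dvd_mul_left hCn).mp h1
  have hdvd2 : π ∣ X 2 ^ (n - 1) := by
    have h2 := key 2
    rw [hg, map_add] at h2
    simp only [pderiv_pow, pderiv_X_self, pderiv_X_of_ne (show (1 : Fin 3) ≠ 2 by decide),
      mul_zero, add_zero, zero_add, mul_one] at h2
    rw [hcast] at h2
    exact (IsUnit.dvd_mul_left hCn).mp h2
  rcases Nat.eq_or_lt_of_le hn with h1 | h1
  · -- n = 1 : π ∣ X 1 ^ 0 = 1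
    rw [← h1] at hdvd1
    exact hπirr.not_isUnit (isUnit_of_dvd_one (by simpa using hdvd1))
  · have hπprime := hπirr.prime
    have hπ1 : π ∣ X 1 := hπprime.dvd_of_dvd_pow hdvd1
    have hπ2 : π ∣ X 2 := hπprime.dvd_of_dvd_pow hdvd2
    have ha1 : Associated π (X 1 : MvPolynomial (Fin 3) (ZMod p)) :=
      hπirr.associated_of_dvd (prime_X_fin3 p 1).irreducible hπ1
    exact X_not_dvd_X_fin3 p (ha1.symm.dvd.trans hπ2)

theorem phi_pow_add_one_squarefree
    (p k : ℕ) (hp : p.Prime) (hk : 0 < k)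
    (φ : MvPolynomial (Fin 3) (ZMod p))
    (hφ : (X 0 - X 1) * (X 0 - X 2) * φ =
      X 0 ^ (p ^ k + 1) - X 1 ^ (p ^ k + 1) - X 2 ^ (p ^ k + 1) +
        (-X 0 + X 1 + X 2) ^ (p ^ k + 1)) :
    Squarefree φ := by
  haveI : Fact p.Prime := ⟨hp⟩
  have hq2 : 2 ≤ p ^ k := (Nat.one_lt_pow hk.ne' hp.one_lt)
  set n : ℕ := p ^ k - 1 with hndef
  have hn1 : 1 ≤ n := by omega
  have hnq : n + 1 = p ^ k := by omega
  have hnz : ((n : ℕ) : ZMod p) ≠ 0 := by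
    have hcast : ((n : ℕ) : ZMod p) = (p : ZMod p) ^ k - 1 := by
      rw [hndef, Nat.cast_sub (by omega)]
      push_cast
      ring
    rw [hcast, ZMod.natCast_self, zero_pow hk.ne', zero_sub]
    exact neg_ne_zero.mpr one_ne_zero
  -- the identity
  set u : MvPolynomial (Fin 3) (ZMod p) := X 0 - X 1 with hu
  set v : MvPolynomial (Fin 3) (ZMod p) := X 0 - X 2 with hv
  have hfu : u ^ (p ^ k) = X 0 ^ (p ^ k) - X 1 ^ (p ^ k) := sub_pow_char_pow _ _ _
  have hfv : v ^ (p ^ k) = X 0 ^ (p ^ k) - X 2 ^ (p ^ k) := sub_pow_char_pow _ _ _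
  have hS : ((-X 0 + X 1 + X 2 : MvPolynomial (Fin 3) (ZMod p))) ^ (p ^ k)
      = -(X 0 : MvPolynomial (Fin 3) (ZMod p)) ^ (p ^ k) + X 1 ^ (p ^ k) + X 2 ^ (p ^ k) := by
    have h0 : (-X 0 + X 1 + X 2 : MvPolynomial (Fin 3) (ZMod p)) = (X 1 + X 2) - X 0 := by ring
    rw [h0, sub_pow_char_pow, add_pow_char_pow]
    ring
  have claim : u * v * (u ^ n + v ^ n) =
      X 0 ^ (p ^ k + 1) - X 1 ^ (p ^ k + 1) - X 2 ^ (p ^ k + 1) +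
        (-X 0 + X 1 + X 2 : MvPolynomial (Fin 3) (ZMod p)) ^ (p ^ k + 1) := by
    have lhs : u * v * (u ^ n + v ^ n) = u ^ (n + 1) * v + u * v ^ (n + 1) := by ring
    rw [lhs, hnq, hfu, hfv]
    rw [pow_succ, pow_succ, pow_succ, pow_succ, hS]
    ring
  have hune : u ≠ 0 := by
    rw [hu, sub_ne_zero]
    intro h
    exact absurd (X_injective h) (by decide)
  have hvne : v ≠ 0 := by
    rw [hv, sub_ne_zero]
    intro h
    exact absurd (X_injective h) (by decide)
  have hφeq : φ = u ^ n + v ^ n :=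
    mul_left_cancel₀ (mul_ne_zero hune hvne) (hφ.trans claim.symm)
  -- transport squarefreeness through the automorphism sending X1 ↦ X0 - X1, X2 ↦ X0 - X2
  set f : MvPolynomial (Fin 3) (ZMod p) →ₐ[ZMod p] MvPolynomial (Fin 3) (ZMod p) := aeval ![X 0, X 0 - X 1, X 0 - X 2] with hf
  have hff : f.comp f = AlgHom.id (ZMod p) (MvPolynomial (Fin 3) (ZMod p)) := by
    apply MvPolynomial.algHom_ext
    intro i
    fin_cases i <;>
      simp [hf, aeval_X, Matrix.cons_val_zero, Matrix.cons_val_one, Matrix.head_cons,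
        Fin.isValue, map_sub]
  set e : MvPolynomial (Fin 3) (ZMod p) ≃ₐ[ZMod p] MvPolynomial (Fin 3) (ZMod p) := AlgEquiv.ofAlgHom f f hff hff with he
  have hsf : Squarefree (X 1 ^ n + X 2 ^ n : MvPolynomial (Fin 3) (ZMod p)) := sf_aux p n hn1 hnz
  have hsf2 : Squarefree (e.toMulEquiv (X 1 ^ n + X 2 ^ n : MvPolynomial (Fin 3) (ZMod p))) :=
    mulEquiv_squarefree _ hsf
  have hemap : e.toMulEquiv (X 1 ^ n + X 2 ^ n : MvPolynomial (Fin 3) (ZMod p)) = u ^ n + v ^ n := by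
    show f (X 1 ^ n + X 2 ^ n) = u ^ n + v ^ n
    simp [hf, hu, hv, aeval_X, Matrix.cons_val_one, Matrix.head_cons]
  rw [hemap] at hsf2
  rw [hφeq]
  exact hsf2
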